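/- Let $n \ge 3$ and let $\lambda$ be a finite signed Borel measure on $\mathbb{R}^n$ supported in $B_{1/2}$ with total variation $|\lambda|(B_{1/2}) < \infty$. Define $v(x) = \int_{\mathbb{R}^n} |x-y|^{2-n} \, d\lambda(y)$. Then for every $\epsilon \in (0, 1/4)$ and every $\delta \in (0, \epsilon)$, there are constants $C_3, C_2 > 0$ depending only on $n$ such that $\frac{1}{\delta^2} \int_{B_\delta} |v(x)|\,dx \le C_3 |\lambda|(B_{2\epsilon}) + C_2 \frac{\delta^{n-2}}{\epsilon^{n-2}} |\lambda|(B_{1/2})$. In particular, if moreover $\lambda(\{0\}) = 0$, then $\lim_{\epsilon \to 0} \limsup_{\delta \to 0} \frac{1}{\delta^2}\int_{B_\delta}|v(x)|\,dx = 0$ in the sense that for every $\eta > 0$ there exist $\epsilon, \delta_0 > 0$ such that $\frac{1}{\delta^2}\int_{B_\delta}|v| \, dx < \eta$ for all $\delta < \delta_0$. -/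

import Mathlib

open MeasureTheory Metric Real

open scoped ENNReal NNReal
set_option maxHeartbeats 1000000

lemma aux_ofReal_abs_sub (a b : ℝ≥0∞) : ENNReal.ofReal ( |a.toReal - b.toReal| ) ≤ a + b := by
  rcases eq_or_ne a ∞ with ha | ha
  · simp [ha]
  rcases eq_or_ne b ∞ with hb | hb
  · simp [hb]
  calc ENNReal.ofReal ( |a.toReal - b.toReal| ) ≤ ENNReal.ofReal (a.toReal + b.toReal) := by
        refine ENNReal.ofReal_le_ofReal (abs_le.mpr ⟨?_, ?_⟩) <;>
          nlinarith [ENNReal.toReal_nonneg (a := a), ENNReal.toReal_nonneg (a := b)]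
    _ = ENNReal.ofReal a.toReal + ENNReal.ofReal b.toReal :=
        ENNReal.ofReal_add ENNReal.toReal_nonneg ENNReal.toReal_nonneg
    _ = a + b := by rw [ENNReal.ofReal_toReal ha, ENNReal.ofReal_toReal hb]

-- key real identity
lemma aux_key (n : ℕ) (hn : 3 ≤ n) {δ : ℝ} (hδ : 0 < δ) (k : ℕ) :
    (δ * (1/2:ℝ)^(k+1)) ^ ((2:ℝ) - (n:ℝ)) * (δ * (1/2:ℝ)^k) ^ (n:ℕ)
      = δ^2 * ((2:ℝ)^n/4) * ((1/4:ℝ))^k := by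
  have hb : (0:ℝ) < δ * (1/2:ℝ)^(k+1) := by positivity
  rw [Real.rpow_sub hb, Real.rpow_two, Real.rpow_natCast]
  have h1 : (δ * (1/2:ℝ)^k) ^ (n:ℕ) = (δ * (1/2:ℝ)^(k+1)) ^ (n:ℕ) * 2^n := by
    rw [← mul_pow]; congr 1; rw [pow_succ]; ring
  rw [h1]
  have hbn : (δ * (1/2:ℝ)^(k+1)) ^ (n:ℕ) ≠ 0 := by positivity
  field_simp
  rw [show (1/4:ℝ)^k = ((1/2:ℝ)^k)^2 by rw [← pow_mul, mul_comm, pow_mul]; norm_num]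
  ring

lemma aux_annuli (n : ℕ) (hn : 3 ≤ n) (y : EuclideanSpace ℝ (Fin n)) {δ : ℝ} (hδ : 0 < δ) :
    ∫⁻ x in ball y δ, ENNReal.ofReal (‖x - y‖ ^ ((2:ℝ) - (n:ℝ)))
      ≤ ENNReal.ofReal (δ^2 * ((2:ℝ)^n/3)) * volume (ball (0 : EuclideanSpace ℝ (Fin n)) 1) := by
  haveI : Nontrivial (EuclideanSpace ℝ (Fin n)) :=
    Module.nontrivial_of_finrank_pos (R := ℝ) (by rw [finrank_euclideanSpace_fin]; omega)
  have hn3 : (3:ℝ) ≤ (n:ℝ) := by exact_mod_cast hn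
  have hne : ((2:ℝ) - (n:ℝ)) ≠ 0 := by linarith
  have hcle : ((2:ℝ) - (n:ℝ)) ≤ 0 := by linarith
  set A : ℕ → Set (EuclideanSpace ℝ (Fin n)) :=
    fun k => {x | δ*(1/2:ℝ)^(k+1) ≤ dist x y} ∩ ball y (δ*(1/2:ℝ)^k) with hA
  have cover : ball y δ ⊆ {y} ∪ ⋃ k, A k := by
    intro x hx
    by_cases hxy : x = y
    · exact Set.mem_union_left _ (by simp [hxy])
    · have hd : 0 < dist x y := dist_pos.mpr hxy
      have hex : ∃ k : ℕ, δ*(1/2:ℝ)^(k+1) ≤ dist x y := by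
        obtain ⟨m, hm⟩ := exists_pow_lt_of_lt_one (div_pos hd hδ) (by norm_num : (1/2:ℝ) < 1)
        refine ⟨m, ?_⟩
        have h1 : ((1:ℝ)/2)^(m+1) ≤ (1/2:ℝ)^m :=
          pow_le_pow_of_le_one (by norm_num) (by norm_num) (by omega)
        have h2 : ((1:ℝ)/2)^m * δ < dist x y := (lt_div_iff₀ hδ).mp hm
        nlinarith [pow_pos (by norm_num : (0:ℝ) < 1/2) m]
      classical
      set k := Nat.find hex with hk
      refine Set.mem_union_right _ (Set.mem_iUnion.mpr ⟨k, ?_⟩)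
      constructor
      · exact Nat.find_spec hex
      · rw [mem_ball]
        rcases Nat.eq_zero_or_pos k with h0 | hpos
        · rw [h0]; simpa using hx
        · have hkj : k = (k-1) + 1 := by omega
          have hmin := Nat.find_min hex (by omega : k - 1 < k)
          push_neg at hmin
          rw [hkj]
          exact hmin
  have hfr : Module.finrank ℝ (EuclideanSpace ℝ (Fin n)) = n := finrank_euclideanSpace_fin
  have termbound : ∀ k : ℕ, ∫⁻ x in A k, ENNReal.ofReal (‖x - y‖ ^ ((2:ℝ) - (n:ℝ)))
      ≤ ENNReal.ofReal (δ^2*((2:ℝ)^n/4)*((1/4:ℝ))^k)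
        * volume (ball (0 : EuclideanSpace ℝ (Fin n)) 1) := by
    intro k
    have hb : (0:ℝ) < δ * (1/2:ℝ)^(k+1) := by positivity
    calc ∫⁻ x in A k, ENNReal.ofReal (‖x - y‖ ^ ((2:ℝ) - (n:ℝ)))
        ≤ ∫⁻ _x in A k, ENNReal.ofReal ((δ*(1/2:ℝ)^(k+1)) ^ ((2:ℝ) - (n:ℝ))) := by
          refine setLIntegral_mono measurable_const (fun x hx => ?_)
          refine ENNReal.ofReal_le_ofReal ?_
          have h1 : δ*(1/2:ℝ)^(k+1) ≤ ‖x - y‖ := by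
            have h0 : δ*(1/2:ℝ)^(k+1) ≤ dist x y := hx.1
            rwa [dist_eq_norm] at h0
          exact Real.rpow_le_rpow_of_nonpos hb h1 hcle
      _ = ENNReal.ofReal ((δ*(1/2:ℝ)^(k+1)) ^ ((2:ℝ) - (n:ℝ))) * volume (A k) :=
          setLIntegral_const _ _
      _ ≤ ENNReal.ofReal ((δ*(1/2:ℝ)^(k+1)) ^ ((2:ℝ) - (n:ℝ)))
            * (ENNReal.ofReal ((δ*(1/2:ℝ)^k)^(n:ℕ))
              * volume (ball (0 : EuclideanSpace ℝ (Fin n)) 1)) := by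
          gcongr
          have hvol : volume (A k) ≤ volume (ball y (δ*(1/2:ℝ)^k)) :=
            measure_mono Set.inter_subset_right
          rwa [Measure.addHaar_ball volume y (by positivity : (0:ℝ) ≤ δ*(1/2:ℝ)^k), hfr] at hvol
      _ = ENNReal.ofReal (δ^2*((2:ℝ)^n/4)*((1/4:ℝ))^k)
            * volume (ball (0 : EuclideanSpace ℝ (Fin n)) 1) := by
          rw [← mul_assoc, ← ENNReal.ofReal_mul (Real.rpow_nonneg (le_of_lt hb) _),
            aux_key n hn hδ k]
  have hsum : ∑' k:ℕ, (δ^2*((2:ℝ)^n/4)*((1/4:ℝ))^k) = δ^2*((2:ℝ)^n/3) := by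
    rw [tsum_mul_left, tsum_geometric_of_lt_one (by norm_num) (by norm_num)]
    norm_num
    ring
  calc ∫⁻ x in ball y δ, ENNReal.ofReal (‖x - y‖ ^ ((2:ℝ) - (n:ℝ)))
      ≤ ∫⁻ x in {y} ∪ ⋃ k, A k, ENNReal.ofReal (‖x - y‖ ^ ((2:ℝ) - (n:ℝ))) :=
        lintegral_mono_set cover
    _ ≤ (∫⁻ x in {y}, ENNReal.ofReal (‖x - y‖ ^ ((2:ℝ) - (n:ℝ))))
          + ∫⁻ x in ⋃ k, A k, ENNReal.ofReal (‖x - y‖ ^ ((2:ℝ) - (n:ℝ))) :=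
        lintegral_union_le _ _ _
    _ = ∫⁻ x in ⋃ k, A k, ENNReal.ofReal (‖x - y‖ ^ ((2:ℝ) - (n:ℝ))) := by
        rw [lintegral_singleton]
        simp [Real.zero_rpow hne]
    _ ≤ ∑' k, ∫⁻ x in A k, ENNReal.ofReal (‖x - y‖ ^ ((2:ℝ) - (n:ℝ))) := lintegral_iUnion_le _ _
    _ ≤ ∑' k, ENNReal.ofReal (δ^2*((2:ℝ)^n/4)*((1/4:ℝ))^k)
          * volume (ball (0 : EuclideanSpace ℝ (Fin n)) 1) := ENNReal.tsum_le_tsum termbound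
    _ = ENNReal.ofReal (δ^2 * ((2:ℝ)^n/3)) * volume (ball (0 : EuclideanSpace ℝ (Fin n)) 1) := by
        rw [ENNReal.tsum_mul_right, ← ENNReal.ofReal_tsum_of_nonneg (fun k => by positivity)
          ((summable_geometric_of_lt_one (by norm_num) (by norm_num)).mul_left _), hsum]

lemma aux_inner (n : ℕ) (hn : 3 ≤ n) (y : EuclideanSpace ℝ (Fin n)) {δ : ℝ} (hδ : 0 < δ) :
    ∫⁻ x in ball (0 : EuclideanSpace ℝ (Fin n)) δ, ENNReal.ofReal (‖x - y‖ ^ ((2:ℝ) - (n:ℝ)))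
      ≤ ENNReal.ofReal (δ^2 * ((2:ℝ)^n/3 + 1))
        * volume (ball (0 : EuclideanSpace ℝ (Fin n)) 1) := by
  haveI : Nontrivial (EuclideanSpace ℝ (Fin n)) :=
    Module.nontrivial_of_finrank_pos (R := ℝ) (by rw [finrank_euclideanSpace_fin]; omega)
  have hn3 : (3:ℝ) ≤ (n:ℝ) := by exact_mod_cast hn
  have hcle : ((2:ℝ) - (n:ℝ)) ≤ 0 := by linarith
  have hfr : Module.finrank ℝ (EuclideanSpace ℝ (Fin n)) = n := finrank_euclideanSpace_fin
  have hdd : (δ:ℝ)^((2:ℝ)-(n:ℝ)) * δ^(n:ℕ) = δ^2 := by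
    rw [Real.rpow_sub hδ, Real.rpow_two, Real.rpow_natCast]
    field_simp
  have hsub : ball (0 : EuclideanSpace ℝ (Fin n)) δ
      ⊆ ball y δ ∪ (ball (0 : EuclideanSpace ℝ (Fin n)) δ \ ball y δ) := by
    intro x hx
    by_cases h : x ∈ ball y δ
    · exact Set.mem_union_left _ h
    · exact Set.mem_union_right _ ⟨hx, h⟩
  have hterm2 : ∫⁻ x in (ball (0 : EuclideanSpace ℝ (Fin n)) δ \ ball y δ),
      ENNReal.ofReal (‖x - y‖ ^ ((2:ℝ) - (n:ℝ)))
      ≤ ENNReal.ofReal (δ^2 * 1) * volume (ball (0 : EuclideanSpace ℝ (Fin n)) 1) := by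
    calc ∫⁻ x in (ball (0 : EuclideanSpace ℝ (Fin n)) δ \ ball y δ),
        ENNReal.ofReal (‖x - y‖ ^ ((2:ℝ) - (n:ℝ)))
        ≤ ∫⁻ _x in (ball (0 : EuclideanSpace ℝ (Fin n)) δ \ ball y δ),
            ENNReal.ofReal (δ ^ ((2:ℝ) - (n:ℝ))) := by
          refine setLIntegral_mono measurable_const (fun x hx => ?_)
          refine ENNReal.ofReal_le_ofReal ?_
          have h1 : δ ≤ ‖x - y‖ := by
            have := hx.2
            rw [mem_ball, not_lt, dist_eq_norm] at this
            exact this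
          exact Real.rpow_le_rpow_of_nonpos hδ h1 hcle
      _ = ENNReal.ofReal (δ ^ ((2:ℝ) - (n:ℝ)))
            * volume (ball (0 : EuclideanSpace ℝ (Fin n)) δ \ ball y δ) := setLIntegral_const _ _
      _ ≤ ENNReal.ofReal (δ ^ ((2:ℝ) - (n:ℝ)))
            * (ENNReal.ofReal ((δ:ℝ)^(n:ℕ)) * volume (ball (0 : EuclideanSpace ℝ (Fin n)) 1)) := by
          gcongr
          have hvol : volume (ball (0 : EuclideanSpace ℝ (Fin n)) δ \ ball y δ)
              ≤ volume (ball (0 : EuclideanSpace ℝ (Fin n)) δ) := measure_mono Set.diff_subset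
          rwa [Measure.addHaar_ball volume (0 : EuclideanSpace ℝ (Fin n)) hδ.le, hfr] at hvol
      _ = ENNReal.ofReal (δ^2 * 1) * volume (ball (0 : EuclideanSpace ℝ (Fin n)) 1) := by
          rw [← mul_assoc, ← ENNReal.ofReal_mul (Real.rpow_nonneg hδ.le _), hdd, mul_one]
  calc ∫⁻ x in ball (0 : EuclideanSpace ℝ (Fin n)) δ, ENNReal.ofReal (‖x - y‖ ^ ((2:ℝ) - (n:ℝ)))
      ≤ ∫⁻ x in ball y δ ∪ (ball (0 : EuclideanSpace ℝ (Fin n)) δ \ ball y δ),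
          ENNReal.ofReal (‖x - y‖ ^ ((2:ℝ) - (n:ℝ))) := lintegral_mono_set hsub
    _ ≤ (∫⁻ x in ball y δ, ENNReal.ofReal (‖x - y‖ ^ ((2:ℝ) - (n:ℝ))))
          + ∫⁻ x in (ball (0 : EuclideanSpace ℝ (Fin n)) δ \ ball y δ),
            ENNReal.ofReal (‖x - y‖ ^ ((2:ℝ) - (n:ℝ))) := lintegral_union_le _ _ _
    _ ≤ ENNReal.ofReal (δ^2 * ((2:ℝ)^n/3)) * volume (ball (0 : EuclideanSpace ℝ (Fin n)) 1)
          + ENNReal.ofReal (δ^2 * 1) * volume (ball (0 : EuclideanSpace ℝ (Fin n)) 1) :=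
        add_le_add (aux_annuli n hn y hδ) hterm2
    _ = ENNReal.ofReal (δ^2 * ((2:ℝ)^n/3 + 1))
          * volume (ball (0 : EuclideanSpace ℝ (Fin n)) 1) := by
        rw [← add_mul, ← ENNReal.ofReal_add (by positivity) (by positivity)]
        ring_nf

/-- Estimate for the Newtonian potential of a finite signed measure `λ` supported in `B_{1/2}`:
`δ^{-2}∫_{B_δ}|v| ≤ C₃|λ|(B_{2ε}) + C₂ (δ/ε)^{n-2}|λ|(B_{1/2})`, and if `λ({0}) = 0` the
averages `δ^{-2}∫_{B_δ}|v|` tend to `0`. -/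
theorem newtonian_potential_small_ball_average
    (n : ℕ) (hn : 3 ≤ n)
    (lam : SignedMeasure (EuclideanSpace ℝ (Fin n)))
    (hsupp : lam.totalVariation (ball (0 : EuclideanSpace ℝ (Fin n)) (1/2))ᶜ = 0)
    (v : EuclideanSpace ℝ (Fin n) → ℝ)
    (hv : ∀ x, v x =
      (∫ y, ‖x - y‖ ^ ((2:ℝ) - (n:ℝ)) ∂lam.toJordanDecomposition.posPart)
      - ∫ y, ‖x - y‖ ^ ((2:ℝ) - (n:ℝ)) ∂lam.toJordanDecomposition.negPart) :
    ∃ C3 : ℝ, 0 < C3 ∧ ∃ C2 : ℝ, 0 < C2 ∧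
      ((∀ ε ∈ Set.Ioo (0:ℝ) (1/4), ∀ δ ∈ Set.Ioo (0:ℝ) ε,
        (1 / δ ^ 2) * ∫ x in ball (0 : EuclideanSpace ℝ (Fin n)) δ, |v x|
          ≤ C3 * (lam.totalVariation (ball (0 : EuclideanSpace ℝ (Fin n)) (2*ε))).toReal
            + C2 * (δ ^ ((n:ℝ) - 2) / ε ^ ((n:ℝ) - 2))
              * (lam.totalVariation (ball (0 : EuclideanSpace ℝ (Fin n)) (1/2))).toReal) ∧
      (lam.totalVariation {0} = 0 →
        ∀ η : ℝ, 0 < η → ∃ δ0 : ℝ, 0 < δ0 ∧ ∀ δ : ℝ, 0 < δ → δ < δ0 →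
          (1 / δ ^ 2) * ∫ x in ball (0 : EuclideanSpace ℝ (Fin n)) δ, |v x| < η)) := by
  haveI : Nontrivial (EuclideanSpace ℝ (Fin n)) :=
    Module.nontrivial_of_finrank_pos (R := ℝ) (by rw [finrank_euclideanSpace_fin]; omega)
  haveI : IsFiniteMeasure lam.totalVariation := by
    rw [SignedMeasure.totalVariation]; infer_instance
  have hn3 : (3:ℝ) ≤ (n:ℝ) := by exact_mod_cast hn
  have hfr : Module.finrank ℝ (EuclideanSpace ℝ (Fin n)) = n := finrank_euclideanSpace_fin
  set c₁ : ℝ≥0∞ := volume (ball (0 : EuclideanSpace ℝ (Fin n)) 1) with hc₁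
  have hc₁pos : 0 < c₁ := measure_ball_pos _ _ one_pos
  have hc₁top : c₁ ≠ ∞ := measure_ball_lt_top.ne
  have hc₁R : 0 < c₁.toReal := ENNReal.toReal_pos hc₁pos.ne' hc₁top
  set C3 : ℝ := ((2:ℝ)^n/3 + 1) * c₁.toReal with hC3
  set C2 : ℝ := c₁.toReal with hC2
  have hC3pos : 0 < C3 := by positivity
  -- kernel and its measurability
  set ker : EuclideanSpace ℝ (Fin n) → EuclideanSpace ℝ (Fin n) → ℝ≥0∞ :=
    fun x y => ENNReal.ofReal (‖x - y‖ ^ ((2:ℝ) - (n:ℝ))) with hkerdef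
  have hker : Measurable (Function.uncurry ker) := by
    apply Measurable.ennreal_ofReal
    exact (measurable_fst.sub measurable_snd).norm.pow measurable_const
  have hvP : ∀ x, v x = (∫⁻ y, ker x y ∂lam.toJordanDecomposition.posPart).toReal
      - (∫⁻ y, ker x y ∂lam.toJordanDecomposition.negPart).toReal := by
    intro x
    have hm : AEStronglyMeasurable (fun y : EuclideanSpace ℝ (Fin n) => ‖x - y‖ ^ ((2:ℝ) - (n:ℝ)))
        (lam.toJordanDecomposition.posPart) :=
      (((measurable_const.sub measurable_id).norm.pow measurable_const)).aestronglyMeasurable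
    have hm' : AEStronglyMeasurable (fun y : EuclideanSpace ℝ (Fin n) => ‖x - y‖ ^ ((2:ℝ) - (n:ℝ)))
        (lam.toJordanDecomposition.negPart) :=
      (((measurable_const.sub measurable_id).norm.pow measurable_const)).aestronglyMeasurable
    rw [hv x,
      integral_eq_lintegral_of_nonneg_ae
        (Filter.Eventually.of_forall (fun y => Real.rpow_nonneg (norm_nonneg _) _)) hm,
      integral_eq_lintegral_of_nonneg_ae
        (Filter.Eventually.of_forall (fun y => Real.rpow_nonneg (norm_nonneg _) _)) hm']
  have hvmeas : Measurable v := by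
    have : v = fun x => (∫⁻ y, ker x y ∂lam.toJordanDecomposition.posPart).toReal
        - (∫⁻ y, ker x y ∂lam.toJordanDecomposition.negPart).toReal := funext hvP
    rw [this]
    exact (hker.lintegral_prod_right').ennreal_toReal.sub
      (hker.lintegral_prod_right').ennreal_toReal
  have hPN : ∀ x, ENNReal.ofReal ( |v x| ) ≤ ∫⁻ y, ker x y ∂lam.totalVariation := by
    intro x
    rw [hvP x, SignedMeasure.totalVariation, lintegral_add_measure]
    exact aux_ofReal_abs_sub _ _
  -- main estimate
  have main : ∀ ε ∈ Set.Ioo (0:ℝ) (1/4), ∀ δ ∈ Set.Ioo (0:ℝ) ε,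
      (1 / δ ^ 2) * ∫ x in ball (0 : EuclideanSpace ℝ (Fin n)) δ, |v x|
        ≤ C3 * (lam.totalVariation (ball (0 : EuclideanSpace ℝ (Fin n)) (2*ε))).toReal
          + C2 * (δ ^ ((n:ℝ) - 2) / ε ^ ((n:ℝ) - 2))
            * (lam.totalVariation (ball (0 : EuclideanSpace ℝ (Fin n)) (1/2))).toReal := by
    rintro ε ⟨hε0, hε4⟩ δ ⟨hδ0, hδε⟩
    have hInt : ∫ x in ball (0 : EuclideanSpace ℝ (Fin n)) δ, |v x|
        = (∫⁻ x in ball (0 : EuclideanSpace ℝ (Fin n)) δ, ENNReal.ofReal ( |v x| )).toReal := by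
      rw [integral_eq_lintegral_of_nonneg_ae
        (Filter.Eventually.of_forall (fun x => abs_nonneg _)) hvmeas.abs.aestronglyMeasurable]
    have swap : ∫⁻ x in ball (0 : EuclideanSpace ℝ (Fin n)) δ, ∫⁻ y, ker x y ∂lam.totalVariation
        = ∫⁻ y, (∫⁻ x in ball (0 : EuclideanSpace ℝ (Fin n)) δ, ker x y) ∂lam.totalVariation :=
      lintegral_lintegral_swap hker.aemeasurable
    -- inner bounds
    have hbound1 : ∫⁻ y in ball (0 : EuclideanSpace ℝ (Fin n)) (2*ε),
        (∫⁻ x in ball (0 : EuclideanSpace ℝ (Fin n)) δ, ker x y) ∂lam.totalVariation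
        ≤ ENNReal.ofReal (δ^2 * ((2:ℝ)^n/3 + 1)) * c₁
          * lam.totalVariation (ball (0 : EuclideanSpace ℝ (Fin n)) (2*ε)) := by
      calc ∫⁻ y in ball (0 : EuclideanSpace ℝ (Fin n)) (2*ε),
          (∫⁻ x in ball (0 : EuclideanSpace ℝ (Fin n)) δ, ker x y) ∂lam.totalVariation
          ≤ ∫⁻ _y in ball (0 : EuclideanSpace ℝ (Fin n)) (2*ε),
            (ENNReal.ofReal (δ^2 * ((2:ℝ)^n/3 + 1)) * c₁) ∂lam.totalVariation :=
            setLIntegral_mono measurable_const (fun y _ => aux_inner n hn y hδ0)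
        _ = ENNReal.ofReal (δ^2 * ((2:ℝ)^n/3 + 1)) * c₁
            * lam.totalVariation (ball (0 : EuclideanSpace ℝ (Fin n)) (2*ε)) :=
            setLIntegral_const _ _
    have hbound2 : ∫⁻ y in (ball (0 : EuclideanSpace ℝ (Fin n)) (2*ε))ᶜ,
        (∫⁻ x in ball (0 : EuclideanSpace ℝ (Fin n)) δ, ker x y) ∂lam.totalVariation
        ≤ ENNReal.ofReal (ε ^ ((2:ℝ) - (n:ℝ)) * δ^(n:ℕ)) * c₁
          * lam.totalVariation (ball (0 : EuclideanSpace ℝ (Fin n)) (1/2)) := by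
      have hpt : ∀ y ∈ (ball (0 : EuclideanSpace ℝ (Fin n)) (2*ε))ᶜ,
          (∫⁻ x in ball (0 : EuclideanSpace ℝ (Fin n)) δ, ker x y)
            ≤ ENNReal.ofReal (ε ^ ((2:ℝ) - (n:ℝ)) * δ^(n:ℕ)) * c₁ := by
        intro y hy
        have hy' : 2*ε ≤ ‖y‖ := by
          have : y ∉ ball (0 : EuclideanSpace ℝ (Fin n)) (2*ε) := hy
          rwa [mem_ball_zero_iff, not_lt] at this
        calc ∫⁻ x in ball (0 : EuclideanSpace ℝ (Fin n)) δ, ker x y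
            ≤ ∫⁻ _x in ball (0 : EuclideanSpace ℝ (Fin n)) δ,
              ENNReal.ofReal (ε ^ ((2:ℝ) - (n:ℝ))) := by
              refine setLIntegral_mono measurable_const (fun x hx => ?_)
              refine ENNReal.ofReal_le_ofReal ?_
              have hxn : ‖x‖ < δ := by rwa [mem_ball_zero_iff] at hx
              have h1 : ε ≤ ‖x - y‖ := by
                have h2 : ‖y‖ - ‖x‖ ≤ ‖y - x‖ := norm_sub_norm_le _ _
                rw [norm_sub_rev] at h2
                linarith
              exact Real.rpow_le_rpow_of_nonpos hε0 h1 (by linarith)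
          _ = ENNReal.ofReal (ε ^ ((2:ℝ) - (n:ℝ)))
              * volume (ball (0 : EuclideanSpace ℝ (Fin n)) δ) := setLIntegral_const _ _
          _ ≤ ENNReal.ofReal (ε ^ ((2:ℝ) - (n:ℝ)) * δ^(n:ℕ)) * c₁ := by
              rw [Measure.addHaar_ball volume (0 : EuclideanSpace ℝ (Fin n)) hδ0.le, hfr,
                ENNReal.ofReal_mul (Real.rpow_nonneg hε0.le _), mul_assoc]
      calc ∫⁻ y in (ball (0 : EuclideanSpace ℝ (Fin n)) (2*ε))ᶜ,
          (∫⁻ x in ball (0 : EuclideanSpace ℝ (Fin n)) δ, ker x y) ∂lam.totalVariation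
          ≤ ∫⁻ _y in (ball (0 : EuclideanSpace ℝ (Fin n)) (2*ε))ᶜ,
            (ENNReal.ofReal (ε ^ ((2:ℝ) - (n:ℝ)) * δ^(n:ℕ)) * c₁) ∂lam.totalVariation :=
            setLIntegral_mono measurable_const hpt
        _ = ENNReal.ofReal (ε ^ ((2:ℝ) - (n:ℝ)) * δ^(n:ℕ)) * c₁
            * lam.totalVariation (ball (0 : EuclideanSpace ℝ (Fin n)) (2*ε))ᶜ :=
            setLIntegral_const _ _
        _ ≤ ENNReal.ofReal (ε ^ ((2:ℝ) - (n:ℝ)) * δ^(n:ℕ)) * c₁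
            * lam.totalVariation (ball (0 : EuclideanSpace ℝ (Fin n)) (1/2)) := by
            refine mul_le_mul_right ?_ _
            have huniv : lam.totalVariation Set.univ
                = lam.totalVariation (ball (0 : EuclideanSpace ℝ (Fin n)) (1/2)) := by
              rw [← measure_add_measure_compl (measurableSet_ball
                (x := (0 : EuclideanSpace ℝ (Fin n))) (ε := (1/2:ℝ))), hsupp, add_zero]
            calc lam.totalVariation (ball (0 : EuclideanSpace ℝ (Fin n)) (2*ε))ᶜ
                ≤ lam.totalVariation Set.univ := measure_mono (Set.subset_univ _)
              _ = _ := huniv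
    -- total bound in ℝ≥0∞
    have hT : ∫⁻ x in ball (0 : EuclideanSpace ℝ (Fin n)) δ, ENNReal.ofReal ( |v x| )
        ≤ ENNReal.ofReal (δ^2 * ((2:ℝ)^n/3 + 1)) * c₁
            * lam.totalVariation (ball (0 : EuclideanSpace ℝ (Fin n)) (2*ε))
          + ENNReal.ofReal (ε ^ ((2:ℝ) - (n:ℝ)) * δ^(n:ℕ)) * c₁
            * lam.totalVariation (ball (0 : EuclideanSpace ℝ (Fin n)) (1/2)) := by
      calc ∫⁻ x in ball (0 : EuclideanSpace ℝ (Fin n)) δ, ENNReal.ofReal ( |v x| )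
          ≤ ∫⁻ x in ball (0 : EuclideanSpace ℝ (Fin n)) δ, ∫⁻ y, ker x y ∂lam.totalVariation :=
            lintegral_mono hPN
        _ = ∫⁻ y, (∫⁻ x in ball (0 : EuclideanSpace ℝ (Fin n)) δ, ker x y) ∂lam.totalVariation :=
            swap
        _ = (∫⁻ y in ball (0 : EuclideanSpace ℝ (Fin n)) (2*ε),
              (∫⁻ x in ball (0 : EuclideanSpace ℝ (Fin n)) δ, ker x y) ∂lam.totalVariation)
            + ∫⁻ y in (ball (0 : EuclideanSpace ℝ (Fin n)) (2*ε))ᶜ,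
              (∫⁻ x in ball (0 : EuclideanSpace ℝ (Fin n)) δ, ker x y) ∂lam.totalVariation :=
            (lintegral_add_compl _ measurableSet_ball).symm
        _ ≤ _ := add_le_add hbound1 hbound2
    -- pass to the reals
    have hfin : ENNReal.ofReal (δ^2 * ((2:ℝ)^n/3 + 1)) * c₁
            * lam.totalVariation (ball (0 : EuclideanSpace ℝ (Fin n)) (2*ε))
          + ENNReal.ofReal (ε ^ ((2:ℝ) - (n:ℝ)) * δ^(n:ℕ)) * c₁
            * lam.totalVariation (ball (0 : EuclideanSpace ℝ (Fin n)) (1/2)) ≠ ∞ := by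
      apply ENNReal.add_ne_top.mpr
      constructor <;>
        exact ENNReal.mul_ne_top (ENNReal.mul_ne_top ENNReal.ofReal_ne_top hc₁top)
          (measure_ne_top _ _)
    have hreal : ∫ x in ball (0 : EuclideanSpace ℝ (Fin n)) δ, |v x|
        ≤ δ^2 * ((2:ℝ)^n/3 + 1) * c₁.toReal
            * (lam.totalVariation (ball (0 : EuclideanSpace ℝ (Fin n)) (2*ε))).toReal
          + ε ^ ((2:ℝ) - (n:ℝ)) * δ^(n:ℕ) * c₁.toReal
            * (lam.totalVariation (ball (0 : EuclideanSpace ℝ (Fin n)) (1/2))).toReal := by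
      rw [hInt]
      have := ENNReal.toReal_mono hfin hT
      refine le_trans this (le_of_eq ?_)
      rw [ENNReal.toReal_add (by
            exact ENNReal.mul_ne_top (ENNReal.mul_ne_top ENNReal.ofReal_ne_top hc₁top)
              (measure_ne_top _ _)) (by
            exact ENNReal.mul_ne_top (ENNReal.mul_ne_top ENNReal.ofReal_ne_top hc₁top)
              (measure_ne_top _ _)),
        ENNReal.toReal_mul, ENNReal.toReal_mul, ENNReal.toReal_mul, ENNReal.toReal_mul,
        ENNReal.toReal_ofReal (by positivity),
        ENNReal.toReal_ofReal (by positivity)]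
    -- final algebra
    have e2 : δ ^ ((n:ℝ) - 2) = δ^(n:ℕ) / δ^2 := by
      rw [Real.rpow_sub hδ0, Real.rpow_two, Real.rpow_natCast]
    have e3 : ε ^ ((n:ℝ) - 2) = ε^(n:ℕ) / ε^2 := by
      rw [Real.rpow_sub hε0, Real.rpow_two, Real.rpow_natCast]
    have e1 : ε ^ ((2:ℝ) - (n:ℝ)) = ε^2 / ε^(n:ℕ) := by
      rw [Real.rpow_sub hε0, Real.rpow_two, Real.rpow_natCast]
    have hδne : (δ:ℝ) ≠ 0 := hδ0.ne'
    have hεne : (ε:ℝ) ≠ 0 := hε0.ne'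
    calc (1 / δ ^ 2) * ∫ x in ball (0 : EuclideanSpace ℝ (Fin n)) δ, |v x|
        ≤ (1 / δ ^ 2) * (δ^2 * ((2:ℝ)^n/3 + 1) * c₁.toReal
            * (lam.totalVariation (ball (0 : EuclideanSpace ℝ (Fin n)) (2*ε))).toReal
          + ε ^ ((2:ℝ) - (n:ℝ)) * δ^(n:ℕ) * c₁.toReal
            * (lam.totalVariation (ball (0 : EuclideanSpace ℝ (Fin n)) (1/2))).toReal) := by
          apply mul_le_mul_of_nonneg_left hreal (by positivity)
      _ = C3 * (lam.totalVariation (ball (0 : EuclideanSpace ℝ (Fin n)) (2*ε))).toReal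
          + C2 * (δ ^ ((n:ℝ) - 2) / ε ^ ((n:ℝ) - 2))
            * (lam.totalVariation (ball (0 : EuclideanSpace ℝ (Fin n)) (1/2))).toReal := by
          rw [e1, e2, e3, hC3, hC2]
          have hεn : (ε:ℝ)^(n:ℕ) ≠ 0 := pow_ne_zero _ hεne
          have hδn : (δ:ℝ)^2 ≠ 0 := pow_ne_zero _ hδne
          field_simp
  refine ⟨C3, hC3pos, C2, hc₁R, main, ?_⟩
  -- second part
  intro htv0 η hη
  have hmono : Antitone (fun k : ℕ => ball (0 : EuclideanSpace ℝ (Fin n)) (1/((k:ℝ)+1))) := by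
    intro k m hkm
    apply ball_subset_ball
    have : (k:ℝ) + 1 ≤ (m:ℝ) + 1 := by exact_mod_cast Nat.succ_le_succ hkm
    exact one_div_le_one_div_of_le (by positivity) this
  have hiInter : (⋂ k : ℕ, ball (0 : EuclideanSpace ℝ (Fin n)) (1/((k:ℝ)+1)))
      = ({0} : Set (EuclideanSpace ℝ (Fin n))) := by
    ext x
    simp only [Set.mem_iInter, mem_ball_zero_iff, Set.mem_singleton_iff]
    constructor
    · intro h
      by_contra hx0
      have hx : 0 < ‖x‖ := norm_pos_iff.mpr hx0
      obtain ⟨k, hk⟩ := exists_nat_one_div_lt hx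
      exact absurd (h k) (not_lt.mpr hk.le)
    · rintro rfl k
      simp only [norm_zero]
      positivity
  have htend : Filter.Tendsto
      (fun k : ℕ => lam.totalVariation (ball (0 : EuclideanSpace ℝ (Fin n)) (1/((k:ℝ)+1))))
      Filter.atTop (nhds 0) := by
    have := tendsto_measure_iInter_atTop (μ := lam.totalVariation)
      (fun k => measurableSet_ball.nullMeasurableSet) hmono ⟨0, measure_ne_top _ _⟩
    rwa [hiInter, htv0] at this
  have hev : ∀ᶠ k : ℕ in Filter.atTop,
      lam.totalVariation (ball (0 : EuclideanSpace ℝ (Fin n)) (1/((k:ℝ)+1)))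
        < ENNReal.ofReal (η/(2*C3)) := by
    apply htend.eventually_lt_const
    exact ENNReal.ofReal_pos.mpr (by positivity)
  obtain ⟨k, hk⟩ := hev.exists
  set ε : ℝ := min (1/(2*((k:ℝ)+1))) (1/8) with hεdef
  have hε0 : 0 < ε := lt_min (by positivity) (by norm_num)
  have hε4 : ε < 1/4 := lt_of_le_of_lt (min_le_right _ _) (by norm_num)
  have h2ε : 2*ε ≤ 1/((k:ℝ)+1) := by
    have : ε ≤ 1/(2*((k:ℝ)+1)) := min_le_left _ _
    rw [le_div_iff₀ (by positivity)] at this ⊢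
    nlinarith
  have hsmall : C3 * (lam.totalVariation
      (ball (0 : EuclideanSpace ℝ (Fin n)) (2*ε))).toReal < η/2 := by
    have hle : lam.totalVariation (ball (0 : EuclideanSpace ℝ (Fin n)) (2*ε))
        < ENNReal.ofReal (η/(2*C3)) :=
      lt_of_le_of_lt (measure_mono (ball_subset_ball h2ε)) hk
    have h1 : (lam.totalVariation (ball (0 : EuclideanSpace ℝ (Fin n)) (2*ε))).toReal
        < η/(2*C3) := by
      have := ENNReal.toReal_strict_mono ENNReal.ofReal_ne_top hle
      rwa [ENNReal.toReal_ofReal (by positivity)] at this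
    have h2 : C3 * (lam.totalVariation (ball (0 : EuclideanSpace ℝ (Fin n)) (2*ε))).toReal
        < C3 * (η/(2*C3)) := by
      exact mul_lt_mul_of_pos_left h1 hC3pos
    have h3 : C3 * (η/(2*C3)) = η/2 := by field_simp
    linarith
  set M : ℝ := C2 * (lam.totalVariation (ball (0 : EuclideanSpace ℝ (Fin n)) (1/2))).toReal
      * (ε^((n:ℝ)-2))⁻¹ with hMdef
  have hM0 : 0 ≤ M := by
    apply mul_nonneg (mul_nonneg hc₁R.le ENNReal.toReal_nonneg)
    exact inv_nonneg.mpr (Real.rpow_nonneg hε0.le _)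
  set δ0 : ℝ := min ε (min 1 (η/(2*(M+1)))) with hδ0def
  have hδ00 : 0 < δ0 := lt_min hε0 (lt_min one_pos (by positivity))
  refine ⟨δ0, hδ00, fun δ hδpos hδlt => ?_⟩
  have hδε : δ < ε := lt_of_lt_of_le hδlt (min_le_left _ _)
  have hδ1 : δ ≤ 1 := le_trans hδlt.le (le_trans (min_le_right _ _) (min_le_left _ _))
  have hδX : δ < η/(2*(M+1)) :=
    lt_of_lt_of_le hδlt (le_trans (min_le_right _ _) (min_le_right _ _))
  have happly := main ε ⟨hε0, hε4⟩ δ ⟨hδpos, hδε⟩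
  refine lt_of_le_of_lt happly ?_
  have h1 : δ^((n:ℝ)-2) ≤ δ := by
    have := Real.rpow_le_rpow_of_exponent_ge hδpos hδ1 (by linarith : (1:ℝ) ≤ (n:ℝ)-2)
    rwa [Real.rpow_one] at this
  have hq : C2 * (δ ^ ((n:ℝ) - 2) / ε ^ ((n:ℝ) - 2))
      * (lam.totalVariation (ball (0 : EuclideanSpace ℝ (Fin n)) (1/2))).toReal < η/2 := by
    have heq : C2 * (δ ^ ((n:ℝ) - 2) / ε ^ ((n:ℝ) - 2))
        * (lam.totalVariation (ball (0 : EuclideanSpace ℝ (Fin n)) (1/2))).toReal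
        = M * δ^((n:ℝ)-2) := by
      rw [hMdef, div_eq_mul_inv]; ring
    have h2 : M * δ^((n:ℝ)-2) ≤ (M+1)*δ := by
      have := mul_le_mul_of_nonneg_left h1 hM0
      nlinarith
    have h3 : (M+1)*δ < (M+1)*(η/(2*(M+1))) := by
      exact mul_lt_mul_of_pos_left hδX (by positivity)
    have h4 : (M+1)*(η/(2*(M+1))) = η/2 := by
      field_simp
    linarith [heq ▸ h2]
  linarith [hsmall, hq]
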